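/- The polynomial f(t) = t^10 + 2t^6 + t^2 − 2 over the finite field F_25 with 25 elements satisfies f(γ^5) = f(γ) for every γ ∈ F_25 (i.e., f is (2,5)-quasi-symmetric), and f has no zeros in F_25, i.e., f(γ) ≠ 0 for all γ ∈ F_25. -/
import Mathlib


/-- In the finite field with 25 elements, the polynomial
`f(t) = t^10 + 2t^6 + t^2 - 2` satisfies `f(γ^5) = f(γ)` for every `γ` (i.e. `f` is
`(2,5)`-quasi-symmetric) and has no zeros. -/
theorem example_quasiSymmetric_no_zeros_F25
    (K : Type*) [Field K] [Fintype K] (hK : Fintype.card K = 25) :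
    (∀ γ : K,
        (Polynomial.X ^ 10 + 2 * Polynomial.X ^ 6 + Polynomial.X ^ 2 - 2 : Polynomial K).eval
            (γ ^ 5)
          = (Polynomial.X ^ 10 + 2 * Polynomial.X ^ 6 + Polynomial.X ^ 2 - 2 :
              Polynomial K).eval γ) ∧
    ∀ γ : K,
      (Polynomial.X ^ 10 + 2 * Polynomial.X ^ 6 + Polynomial.X ^ 2 - 2 : Polynomial K).eval γ
        ≠ 0 := by
  have hcard : ((25 : ℕ) : K) = 0 := by
    have := FiniteField.cast_card_eq_zero K
    rwa [hK] at this
  have h5 : (5 : K) = 0 := by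
    have h : (5 : K) * 5 = 0 := by
      have : ((25 : ℕ) : K) = (5 : K) * 5 := by norm_num
      rw [← this]; exact hcard
    exact mul_self_eq_zero.mp h
  have hpow : ∀ γ : K, γ ^ 25 = γ := by
    intro γ
    have := FiniteField.pow_card γ
    rwa [hK] at this
  constructor
  · intro γ
    have h25 := hpow γ
    simp only [Polynomial.eval_sub, Polynomial.eval_add, Polynomial.eval_mul,
      Polynomial.eval_pow, Polynomial.eval_X, Polynomial.eval_ofNat]
    linear_combination (γ ^ 25 + γ + 2 * γ ^ 5) * h25
  · intro γ hf
    simp only [Polynomial.eval_sub, Polynomial.eval_add, Polynomial.eval_mul,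
      Polynomial.eval_pow, Polynomial.eval_X, Polynomial.eval_ofNat] at hf
    set x : K := γ ^ 5 + γ with hx
    have h25 := hpow γ
    have hx5 : x ^ 5 = x := by
      rw [hx]
      linear_combination h25 + (γ ^ 21 + 2 * γ ^ 17 + 2 * γ ^ 13 + γ ^ 9) * h5
    have hx2 : x ^ 2 = 2 := by
      rw [hx]; linear_combination hf
    have h3x : (3 : K) * x = 0 := by
      linear_combination hx5 - (x ^ 2 + 2) * x * hx2
    have hx0 : x = 0 := by
      linear_combination 2 * h3x - x * h5
    have h2 : (2 : K) = 0 := by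
      rw [hx0] at hx2
      linear_combination -hx2
    have h1 : (1 : K) = 0 := by
      linear_combination h5 - 2 * h2
    exact one_ne_zero h1
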